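/- There exists a tie-breaking order over budget allocations for which the resulting approval-maximising rule fails to be strategyproof even on unit-cost allocation instances, under both the overlap preference model and the cost preference model: there exist a unit-cost allocation instance I = ⟨𝒫, c, B⟩, a strict linear order τ on the subsets of 𝒫, an approval profile A, and an agent i such that the rule F_τ(I, A) = τ-first element of argmax over feasible budget allocations A of Σ_{p∈A} n_p^A satisfies F_τ(I, A') ≻_{top_i(𝒫)} F_τ(I, (A'_{-i}, top_i(𝒫))) for some ballot A'_i ≠ top_i(𝒫). In particular, this is witnessed by the instance with 𝒫 = {p_1, …, p_7}, all costs equal to 1, B = 4, two agents with preference orders p_1 ▷_1 p_2 ▷_1 p_3 ▷_1 p_4 ▷_1 … and p_4 ▷_2 p_5 ▷_2 p_6 ▷_2 p_7 ▷_2 …, and a tie-breaking order placing {p_1, p_2, p_3, p_5} first and {p_4, p_5, p_6, p_7} second, where agent 1 submits {p_1, p_2, p_3} instead of {p_1, p_2, p_3, p_4}. -/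

import Mathlib

open Finset

namespace PB

open scoped Classical

/-- An approval/shortlisting profile for `n` agents: each agent contributes a
finite set of (indices of) projects. Projects are identified with their indices. -/
abbrev Profile (n : ℕ) := Fin n → Finset ℕ

/-- The union `⋃ P` of all proposals in a profile. -/
def unionP {n : ℕ} (P : Profile n) : Finset ℕ := Finset.univ.sup P

/-- Encoding of a finite set of projects; a set is lexicographically preferred
(amongst the projects on which two sets differ, the one with the lowest index
belongs to the preferred set) iff its encoding is larger. -/
noncomputable def enc (P : Finset ℕ) : ℚ := P.sum fun i => (1 / 2 : ℚ) ^ i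

/-- The canonical tie-breaking rule `T` on a family of sets of projects:
the (unique) lexicographically first set of the family. -/
noncomputable def Tfam (𝔓 : Finset (Finset ℕ)) : Finset ℕ :=
  if h : ∃ P ∈ 𝔓, ∀ Q ∈ 𝔓, enc Q ≤ enc P then h.choose else ∅

/-- The `r`-least element of a finite set of projects (`r` read as "strictly before"). -/
noncomputable def first (r : ℕ → ℕ → Prop) (P : Finset ℕ) : ℕ :=
  if h : ∃ p ∈ P, ∀ q ∈ P, q ≠ p → r p q then h.choose else 0

/-- The canonical tie-breaking rule `T` on a nonempty set of projects: least index. -/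
noncomputable def Tproj (P : Finset ℕ) : ℕ := first (· < ·) P

noncomputable def greedyAux (c : ℕ → ℕ) (r : ℕ → ℕ → Prop) : ℕ → Finset ℕ → ℕ → Finset ℕ
  | 0, _, _ => ∅
  | fuel + 1, P, b =>
    if P.Nonempty then
      if c (first r P) ≤ b then
        insert (first r P) (greedyAux c r fuel (P.erase (first r P)) (b - c (first r P)))
      else greedyAux c r fuel (P.erase (first r P)) b
    else ∅

/-- Greedy selection: examine the projects of `P` following the strict order `r`,
selecting a project iff doing so keeps the total cost within the budget `B`. -/
noncomputable def GREED (c : ℕ → ℕ) (B : ℕ) (P : Finset ℕ) (r : ℕ → ℕ → Prop) : Finset ℕ :=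
  greedyAux c r P.card P B

/-- A shortlisting rule: for every number `n` of agents, cost function, budget
limit, universe `ℙ` of projects and shortlisting profile, a shortlist. -/
abbrev ShortRule := ∀ n : ℕ, (ℕ → ℕ) → ℕ → Finset ℕ → Profile n → Finset ℕ

/-- An allocation rule: for every number `n` of agents, cost function, budget
limit, set `Sh` of shortlisted projects and approval profile, a budget allocation. -/
abbrev AllocRule := ∀ n : ℕ, (ℕ → ℕ) → ℕ → Finset ℕ → Profile n → Finset ℕ

/-- A shortlisting rule must return a subset of the union of the proposals. -/
def IsShortRule (R : ShortRule) : Prop :=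
  ∀ (n : ℕ) (c : ℕ → ℕ) (B : ℕ) (ℙ : Finset ℕ) (P : Profile n),
    (∀ j, P j ⊆ ℙ) → R n c B ℙ P ⊆ unionP P

/-- An allocation rule must return a feasible budget allocation. -/
def IsAllocRule (F : AllocRule) : Prop :=
  ∀ (n : ℕ) (c : ℕ → ℕ) (B : ℕ) (Sh : Finset ℕ) (A : Profile n),
    (∀ j, A j ⊆ Sh) → F n c B Sh A ⊆ Sh ∧ (F n c B Sh A).sum c ≤ B

/-- The nomination shortlisting rule. -/
def nomination : ShortRule := fun _ _ _ _ P => unionP P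

/-- Non-wastefulness of a shortlisting rule. -/
def NonWasteful (R : ShortRule) : Prop :=
  ∀ (n : ℕ) (c : ℕ → ℕ) (B : ℕ) (ℙ : Finset ℕ) (P : Profile n),
    (∀ p ∈ ℙ, c p ≤ B) → (∀ j, P j ⊆ ℙ) →
    B ≤ (R n c B ℙ P).sum c ∨ R n c B ℙ P = unionP P

/-- A shortlist `S` is representatively dominated (given instance and profile). -/
def RepDominated {n : ℕ} (c : ℕ → ℕ) (ℙ : Finset ℕ) (P : Profile n) (S : Finset ℕ) : Prop :=
  ∃ S' ⊆ ℙ, S'.sum c ≤ S.sum c ∧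
    (∀ i, (S ∩ P i).card ≤ (S' ∩ P i).card) ∧ ∃ i, (S ∩ P i).card < (S' ∩ P i).card

/-- Representation efficiency of a shortlisting rule. -/
def RepEfficient (R : ShortRule) : Prop :=
  ∀ (n : ℕ) (c : ℕ → ℕ) (B : ℕ) (ℙ : Finset ℕ) (P : Profile n),
    (∀ p ∈ ℙ, c p ≤ B) → (∀ j, P j ⊆ ℙ) →
    ¬ RepDominated c ℙ P (R n c B ℙ P)

/-- The representation score `Σ_i Σ_{ℓ=0}^{|P_i ∩ S|} (1/n)^ℓ`. -/
noncomputable def reprScore (n : ℕ) (P : Profile n) (S : Finset ℕ) : ℚ :=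
  ∑ i, ∑ l ∈ Finset.range ((P i ∩ S).card + 1), (1 / (n : ℚ)) ^ l

/-- The `k`-equal-representation shortlisting rule. -/
noncomputable def equalRepr (k : ℕ) : ShortRule := fun n c B _ P =>
  Tfam (((unionP P).powerset).filter fun S =>
    S.sum c ≤ k * B ∧
    ∀ S' ∈ (unionP P).powerset, S'.sum c ≤ k * B → reprScore n P S' ≤ reprScore n P S)

/-- The geometric median of a set of projects w.r.t. a distance `δ`. -/
noncomputable def med (δ : ℕ → ℕ → ℝ) (V : Finset ℕ) : ℕ :=
  Tproj (V.filter fun p => ∀ q ∈ V, V.sum (fun x => δ p x) ≤ V.sum (fun x => δ q x))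

def IsPartition (V : Finset (Finset ℕ)) (P : Finset ℕ) : Prop :=
  (∀ v ∈ V, v.Nonempty) ∧ V.sup id = P ∧ ∀ v ∈ V, ∀ w ∈ V, v ≠ w → Disjoint v w

/-- `(k, ℓ)`-Voronoï partitions w.r.t. `δ`. -/
def IsVoronoi (δ : ℕ → ℕ → ℝ) (c : ℕ → ℕ) (B k : ℕ) (ℓ : ℝ)
    (V : Finset (Finset ℕ)) (P : Finset ℕ) : Prop :=
  IsPartition V P ∧ (V.sum fun v => c (med δ v)) ≤ k * B ∧
  ∀ v ∈ V, ∀ p ∈ v,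
    (∀ w ∈ V, w ≠ v → δ p (med δ v) ≤ δ p (med δ w)) ∧ δ p (med δ v) ≤ ℓ

/-- The smallest `ℓ` such that a `(k, ℓ)`-Voronoï partition of `P` exists. -/
noncomputable def lstar (δ : ℕ → ℕ → ℝ) (c : ℕ → ℕ) (B k : ℕ) (P : Finset ℕ) : ℝ :=
  sInf {ℓ : ℝ | ∃ V : Finset (Finset ℕ), IsVoronoi δ c B k ℓ V P}

/-- The `k`-median shortlisting rule w.r.t. the distance `δ`. -/
noncomputable def kMedian (δ : ℕ → ℕ → ℝ) (k : ℕ) : ShortRule := fun _ c B _ P =>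
  Tfam ((((unionP P).powerset.powerset).filter fun V =>
    IsVoronoi δ c B k (lstar δ c B k (unionP P)) V (unionP P)).image fun V => V.image (med δ))

/-- `δ` is a metric (on the universe of conceivable projects). -/
def IsMetric (δ : ℕ → ℕ → ℝ) : Prop :=
  (∀ p q, δ p q = 0 ↔ p = q) ∧ (∀ p q, δ p q = δ q p) ∧ ∀ p q r, δ p r ≤ δ p q + δ q r

/-- The approval score of project `p` in profile `A`. -/
def appScore {n : ℕ} (A : Profile n) (p : ℕ) : ℕ :=
  (Finset.univ.filter fun i => p ∈ A i).card

/-- The greedy-approval allocation rule. -/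
noncomputable def greedyApproval : AllocRule := fun _ c B Sh A =>
  GREED c B Sh fun p q => appScore A q < appScore A p ∨ (appScore A p = appScore A q ∧ p < q)

/-- The approval-maximising allocation rule (canonical tie-breaking). -/
noncomputable def approvalMax : AllocRule := fun _ c B Sh A =>
  Tfam ((Sh.powerset).filter fun S =>
    S.sum c ≤ B ∧ ∀ S' ∈ Sh.powerset, S'.sum c ≤ B → S'.sum (appScore A) ≤ S.sum (appScore A))

/-- `A` is an exhaustive budget allocation for the instance `⟨Sh, c, B⟩`. -/
def ExhaustiveAlloc (c : ℕ → ℕ) (B : ℕ) (Sh A : Finset ℕ) : Prop :=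
  A ⊆ Sh ∧ A.sum c ≤ B ∧ ∀ p ∈ Sh, p ∉ A → ¬ (A.sum c + c p ≤ B)

/-- An allocation rule is exhaustive if it always returns an exhaustive allocation. -/
def ExhaustiveRule (F : AllocRule) : Prop :=
  ∀ (n : ℕ) (c : ℕ → ℕ) (B : ℕ) (Sh : Finset ℕ) (A : Profile n),
    (∀ j, A j ⊆ Sh) → ExhaustiveAlloc c B Sh (F n c B Sh A)

/-- Unanimity of an allocation rule. -/
def Unanimous (F : AllocRule) : Prop :=
  ∀ (n : ℕ) (c : ℕ → ℕ) (B : ℕ) (Sh : Finset ℕ) (a : Finset ℕ),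
    a ⊆ Sh → a.sum c ≤ B → a ⊆ F n c B Sh (fun _ => a)

/-- Strong unanimity of an allocation rule. -/
def StronglyUnanimous (F : AllocRule) : Prop :=
  ∀ (n : ℕ) (c : ℕ → ℕ) (B : ℕ) (Sh : Finset ℕ) (i : Fin n) (a : Finset ℕ) (A : Profile n),
    3 ≤ n → a ⊆ Sh → a.sum c ≤ B → (∀ j, j ≠ i → A j = a) → a ⊆ F n c B Sh A

/-- A preference model: given the cost function and an ideal set, the utility
of a budget allocation.  `overlapU` and `costU` are the two models used. -/
abbrev PrefModel := (ℕ → ℕ) → Finset ℕ → Finset ℕ → ℕ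

def overlapU : PrefModel := fun _ P A => (A ∩ P).card
def costU : PrefModel := fun c P A => (A ∩ P).sum c

/-- Budget allocations reachable by agent `i` by changing her own ballot. -/
noncomputable def reachable (n : ℕ) (c : ℕ → ℕ) (B : ℕ) (F : AllocRule)
    (Sh : Finset ℕ) (A : Profile n) (i : Fin n) : Finset (Finset ℕ) :=
  (Sh.powerset).image fun b => F n c B Sh (Function.update A i b)

/-- The best response `A*_i(I, A, F)` of agent `i` (with preference order `r`). -/
noncomputable def Astar (U : PrefModel) (n : ℕ) (c : ℕ → ℕ) (B : ℕ) (F : AllocRule)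
    (r : ℕ → ℕ → Prop) (Sh : Finset ℕ) (A : Profile n) (i : Fin n) : Finset ℕ :=
  Tfam ((reachable n c B F Sh A i).filter fun X =>
    ∀ Y ∈ reachable n c B F Sh A i, U c (GREED c B Sh r) Y ≤ U c (GREED c B Sh r) X)

/-- `F*(I, A)`: the outcome after agent `i` best-responds to profile `A`. -/
noncomputable def Fstar (U : PrefModel) (n : ℕ) (c : ℕ → ℕ) (B : ℕ) (F : AllocRule)
    (r : ℕ → ℕ → Prop) (Sh : Finset ℕ) (A : Profile n) (i : Fin n) : Finset ℕ :=
  F n c B Sh (Function.update A i (Astar U n c B F r Sh A i))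

/-- `Pi'` is a successful pessimistic manipulation for agent `i` (base profile `P`). -/
def SuccPess (U : PrefModel) (R : ShortRule) (F : AllocRule) (n : ℕ) (c : ℕ → ℕ) (B : ℕ)
    (ℙ : Finset ℕ) (prefs : Fin n → ℕ → ℕ → Prop) (P : Profile n) (i : Fin n)
    (Pi' : Finset ℕ) : Prop :=
  let Sh := R n c B ℙ P
  let Sh' := R n c B ℙ (Function.update P i Pi')
  let tp := GREED c B (Sh ∪ Sh') (prefs i)
  (∀ A A' : Profile n, (∀ j, A j ⊆ Sh) → (∀ j, A' j ⊆ Sh') →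
      U c tp (Fstar U n c B F (prefs i) Sh A i) ≤ U c tp (Fstar U n c B F (prefs i) Sh' A' i)) ∧
  ∃ A A' : Profile n, (∀ j, A j ⊆ Sh) ∧ (∀ j, A' j ⊆ Sh') ∧
      U c tp (Fstar U n c B F (prefs i) Sh A i) < U c tp (Fstar U n c B F (prefs i) Sh' A' i)

/-- `Pi'` is a successful optimistic manipulation for agent `i` (base profile `P`). -/
def SuccOpt (U : PrefModel) (R : ShortRule) (F : AllocRule) (n : ℕ) (c : ℕ → ℕ) (B : ℕ)
    (ℙ : Finset ℕ) (prefs : Fin n → ℕ → ℕ → Prop) (P : Profile n) (i : Fin n)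
    (Pi' : Finset ℕ) : Prop :=
  let Sh := R n c B ℙ P
  let Sh' := R n c B ℙ (Function.update P i Pi')
  let tp := GREED c B (Sh ∪ Sh') (prefs i)
  ∃ A A' : Profile n, (∀ j, A j ⊆ Sh) ∧ (∀ j, A' j ⊆ Sh') ∧
      U c tp (Fstar U n c B F (prefs i) Sh A i) < U c tp (Fstar U n c B F (prefs i) Sh' A' i)

/-- `Pi'` is a successful anticipative manipulation for agent `i` (base profile `P`). -/
def SuccAnt (U : PrefModel) (R : ShortRule) (F : AllocRule) (n : ℕ) (c : ℕ → ℕ) (B : ℕ)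
    (ℙ : Finset ℕ) (prefs : Fin n → ℕ → ℕ → Prop) (P : Profile n) (i : Fin n)
    (Pi' : Finset ℕ) : Prop :=
  let Sh := R n c B ℙ P
  let Sh' := R n c B ℙ (Function.update P i Pi')
  let tp := GREED c B (Sh ∪ Sh') (prefs i)
  U c tp (Fstar U n c B F (prefs i) Sh (fun j => GREED c B Sh (prefs j)) i)
    < U c tp (Fstar U n c B F (prefs i) Sh' (fun j => GREED c B Sh' (prefs j)) i)

section FSSP

variable (U : PrefModel) (R : ShortRule) (F : AllocRule)

/-- First-stage strategyproofness, awareness-restricted, pessimistic. -/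
def R_FSSP_P : Prop :=
  ∀ (n : ℕ) (c : ℕ → ℕ) (B : ℕ) (ℙ : Finset ℕ) (prefs : Fin n → ℕ → ℕ → Prop)
    (C P : Profile n) (i : Fin n) (Pi' : Finset ℕ),
    (∀ p ∈ ℙ, c p ≤ B) → (∀ j, IsStrictTotalOrder ℕ (prefs j)) →
    (∀ j, C j ⊆ ℙ) → (∀ j, P j ⊆ C j) → Pi' ⊆ C i →
    ¬ SuccPess U R F n c B ℙ prefs (Function.update P i (GREED c B (C i) (prefs i))) i Pi'

/-- First-stage strategyproofness, awareness-restricted, optimistic. -/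
def R_FSSP_O : Prop :=
  ∀ (n : ℕ) (c : ℕ → ℕ) (B : ℕ) (ℙ : Finset ℕ) (prefs : Fin n → ℕ → ℕ → Prop)
    (C P : Profile n) (i : Fin n) (Pi' : Finset ℕ),
    (∀ p ∈ ℙ, c p ≤ B) → (∀ j, IsStrictTotalOrder ℕ (prefs j)) →
    (∀ j, C j ⊆ ℙ) → (∀ j, P j ⊆ C j) → Pi' ⊆ C i →
    ¬ SuccOpt U R F n c B ℙ prefs (Function.update P i (GREED c B (C i) (prefs i))) i Pi'

/-- First-stage strategyproofness, awareness-restricted, anticipative. -/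
def R_FSSP_A : Prop :=
  ∀ (n : ℕ) (c : ℕ → ℕ) (B : ℕ) (ℙ : Finset ℕ) (prefs : Fin n → ℕ → ℕ → Prop)
    (C P : Profile n) (i : Fin n) (Pi' : Finset ℕ),
    (∀ p ∈ ℙ, c p ≤ B) → (∀ j, IsStrictTotalOrder ℕ (prefs j)) →
    (∀ j, C j ⊆ ℙ) → (∀ j, P j ⊆ C j) → Pi' ⊆ C i →
    ¬ SuccAnt U R F n c B ℙ prefs (Function.update P i (GREED c B (C i) (prefs i))) i Pi'

/-- First-stage strategyproofness, unrestricted, pessimistic. -/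
def U_FSSP_P : Prop :=
  ∀ (n : ℕ) (c : ℕ → ℕ) (B : ℕ) (ℙ : Finset ℕ) (prefs : Fin n → ℕ → ℕ → Prop)
    (C P : Profile n) (i : Fin n) (Pi' : Finset ℕ),
    (∀ p ∈ ℙ, c p ≤ B) → (∀ j, IsStrictTotalOrder ℕ (prefs j)) →
    (∀ j, C j ⊆ ℙ) → (∀ j, P j ⊆ C j) → Pi' ⊆ C i ∪ unionP P →
    ¬ SuccPess U R F n c B ℙ prefs
        (Function.update P i (GREED c B (C i ∪ unionP P) (prefs i))) i Pi'

/-- First-stage strategyproofness, unrestricted, optimistic. -/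
def U_FSSP_O : Prop :=
  ∀ (n : ℕ) (c : ℕ → ℕ) (B : ℕ) (ℙ : Finset ℕ) (prefs : Fin n → ℕ → ℕ → Prop)
    (C P : Profile n) (i : Fin n) (Pi' : Finset ℕ),
    (∀ p ∈ ℙ, c p ≤ B) → (∀ j, IsStrictTotalOrder ℕ (prefs j)) →
    (∀ j, C j ⊆ ℙ) → (∀ j, P j ⊆ C j) → Pi' ⊆ C i ∪ unionP P →
    ¬ SuccOpt U R F n c B ℙ prefs
        (Function.update P i (GREED c B (C i ∪ unionP P) (prefs i))) i Pi'

/-- First-stage strategyproofness, unrestricted, anticipative. -/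
def U_FSSP_A : Prop :=
  ∀ (n : ℕ) (c : ℕ → ℕ) (B : ℕ) (ℙ : Finset ℕ) (prefs : Fin n → ℕ → ℕ → Prop)
    (C P : Profile n) (i : Fin n) (Pi' : Finset ℕ),
    (∀ p ∈ ℙ, c p ≤ B) → (∀ j, IsStrictTotalOrder ℕ (prefs j)) →
    (∀ j, C j ⊆ ℙ) → (∀ j, P j ⊆ C j) → Pi' ⊆ C i ∪ unionP P →
    ¬ SuccAnt U R F n c B ℙ prefs
        (Function.update P i (GREED c B (C i ∪ unionP P) (prefs i))) i Pi'

end FSSP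

/-- Unit costs for the witnessing instance. -/
def c19 : ℕ → ℕ := fun _ => 1

/-- The seven projects of the witnessing instance (budget `B = 4`). -/
def P19 : Finset ℕ := {1, 2, 3, 4, 5, 6, 7}

/-- The approval-maximising rule with an arbitrary tie-breaking order `τ` over
budget allocations: the `τ`-first feasible allocation maximising total approval. -/
noncomputable def approvalMaxTau (τ : Finset ℕ → Finset ℕ → Prop)
    (n : ℕ) (c : ℕ → ℕ) (B : ℕ) (Sh : Finset ℕ) (A : Profile n) : Finset ℕ :=
  let M := (Sh.powerset).filter fun S =>
    S.sum c ≤ B ∧ ∀ S' ∈ Sh.powerset, S'.sum c ≤ B → S'.sum (appScore A) ≤ S.sum (appScore A)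
  if h : ∃ S ∈ M, ∀ S' ∈ M, S' ≠ S → τ S S' then h.choose else ∅

set_option maxRecDepth 100000

section Thm19Aux

/-- Rank function for agent 1's preferences (`1 ▷ 2 ▷ 3 ▷ 4 ▷ …`). -/
def rank0 (p : ℕ) : ℕ :=
  if p = 1 then 0 else if p = 2 then 1 else if p = 3 then 2 else if p = 4 then 3 else p + 4

/-- Rank function for agent 2's preferences (`4 ▷ 5 ▷ 6 ▷ 7 ▷ …`). -/
def rank1 (p : ℕ) : ℕ :=
  if p = 4 then 0 else if p = 5 then 1 else if p = 6 then 2 else if p = 7 then 3 else p + 4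

def r0 : ℕ → ℕ → Prop := fun p q => rank0 p < rank0 q
def r1 : ℕ → ℕ → Prop := fun p q => rank1 p < rank1 q

def prefs19 : Fin 2 → ℕ → ℕ → Prop := fun j => if j = 0 then r0 else r1

instance : DecidableRel r0 := fun p q => inferInstanceAs (Decidable (rank0 p < rank0 q))
instance : DecidableRel r1 := fun p q => inferInstanceAs (Decidable (rank1 p < rank1 q))

lemma rank0_inj : Function.Injective rank0 := by
  intro a b h; unfold rank0 at h; split_ifs at h <;> omega

lemma rank1_inj : Function.Injective rank1 := by
  intro a b h; unfold rank1 at h; split_ifs at h <;> omega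

lemma sto_of_inj {α : Type*} (f : α → ℕ) (hf : Function.Injective f) :
    IsStrictTotalOrder α (fun a b => f a < f b) where
  trichotomous a b := by
    rcases lt_trichotomy (f a) (f b) with h | h | h
    · exact fun h1 _ => absurd h h1
    · exact fun _ _ => hf h
    · exact fun _ h2 => absurd h h2
  irrefl a := lt_irrefl _
  trans a b c := lt_trans

/-- Tie-breaking key: `{1,2,3,5}` first, `{4,5,6,7}` second, then anything. -/
noncomputable def key19 (S : Finset ℕ) : ℕ :=
  if S = ({1,2,3,5} : Finset ℕ) then 0
  else if S = ({4,5,6,7} : Finset ℕ) then 1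
  else Encodable.encode S + 2

noncomputable def tau19 : Finset ℕ → Finset ℕ → Prop := fun S T => key19 S < key19 T

lemma key19_inj : Function.Injective key19 := by
  intro S T h
  unfold key19 at h
  split_ifs at h <;> try omega
  · simp_all
  · simp_all
  · exact Encodable.encode_injective (by omega)

lemma lt_asymm' {r : ℕ → ℕ → Prop} (f : ℕ → ℕ) (hr : r = fun p q => f p < f q) :
    ∀ a b, r a b → ¬ r b a := by subst hr; exact fun a b h h' => lt_asymm h h'

lemma first_eq {r : ℕ → ℕ → Prop} (hasym : ∀ a b, r a b → ¬ r b a)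
    {P : Finset ℕ} {p : ℕ} (hp : p ∈ P) (hmin : ∀ q ∈ P, q ≠ p → r p q) :
    first r P = p := by
  have h : ∃ p ∈ P, ∀ q ∈ P, q ≠ p → r p q := ⟨p, hp, hmin⟩
  rw [first, dif_pos h]
  obtain ⟨hx, hx2⟩ := h.choose_spec
  by_contra hne
  exact hasym _ _ (hmin _ hx hne) (hx2 p hp (Ne.symm hne))

lemma greedy_sel {r : ℕ → ℕ → Prop} (hasym : ∀ a b, r a b → ¬ r b a)
    {P : Finset ℕ} {p b b' fuel : ℕ} (hp : p ∈ P)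
    (hmin : ∀ q ∈ P, q ≠ p → r p q) (hb : 1 ≤ b) {Q : Finset ℕ}
    (hQ : P.erase p = Q) (hb' : b - 1 = b') :
    greedyAux c19 r (fuel + 1) P b = insert p (greedyAux c19 r fuel Q b') := by
  rw [greedyAux, if_pos ⟨p, hp⟩, first_eq hasym hp hmin, if_pos (show c19 p ≤ b from hb),
    hQ, show b - c19 p = b' from hb']

lemma greedy_skip {r : ℕ → ℕ → Prop} (hasym : ∀ a b, r a b → ¬ r b a)
    {P : Finset ℕ} (p : ℕ) {fuel : ℕ} (hp : p ∈ P)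
    (hmin : ∀ q ∈ P, q ≠ p → r p q) {Q : Finset ℕ} (hQ : P.erase p = Q) :
    greedyAux c19 r (fuel + 1) P 0 = greedyAux c19 r fuel Q 0 := by
  rw [greedyAux, if_pos ⟨p, hp⟩, first_eq hasym hp hmin,
    if_neg (show ¬ c19 p ≤ 0 from by simp [c19]), hQ]

lemma greed_r0 : GREED c19 4 P19 r0 = ({1,2,3,4} : Finset ℕ) := by
  have ha := lt_asymm' rank0 (rfl : r0 = _)
  have s1 : greedyAux c19 r0 7 P19 4
      = insert 1 (greedyAux c19 r0 6 {2,3,4,5,6,7} 3) :=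
    greedy_sel ha (by decide) (by decide) (by norm_num) (by decide) (by norm_num)
  have s2 : greedyAux c19 r0 6 ({2,3,4,5,6,7} : Finset ℕ) 3
      = insert 2 (greedyAux c19 r0 5 {3,4,5,6,7} 2) :=
    greedy_sel ha (by decide) (by decide) (by norm_num) (by decide) (by norm_num)
  have s3 : greedyAux c19 r0 5 ({3,4,5,6,7} : Finset ℕ) 2
      = insert 3 (greedyAux c19 r0 4 {4,5,6,7} 1) :=
    greedy_sel ha (by decide) (by decide) (by norm_num) (by decide) (by norm_num)
  have s4 : greedyAux c19 r0 4 ({4,5,6,7} : Finset ℕ) 1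
      = insert 4 (greedyAux c19 r0 3 {5,6,7} 0) :=
    greedy_sel ha (by decide) (by decide) (by norm_num) (by decide) (by norm_num)
  have s5 : greedyAux c19 r0 3 ({5,6,7} : Finset ℕ) 0
      = greedyAux c19 r0 2 {6,7} 0 :=
    greedy_skip ha 5 (by decide) (by decide) (by decide)
  have s6 : greedyAux c19 r0 2 ({6,7} : Finset ℕ) 0
      = greedyAux c19 r0 1 {7} 0 :=
    greedy_skip ha 6 (by decide) (by decide) (by decide)
  have s7 : greedyAux c19 r0 1 ({7} : Finset ℕ) 0
      = greedyAux c19 r0 0 ∅ 0 :=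
    greedy_skip ha 7 (by decide) (by decide) (by decide)
  have s8 : greedyAux c19 r0 0 (∅ : Finset ℕ) 0 = ∅ := rfl
  have hcard : P19.card = 7 := by decide
  unfold GREED
  rw [hcard, s1, s2, s3, s4, s5, s6, s7, s8]
  decide

lemma greed_r1 : GREED c19 4 P19 r1 = ({4,5,6,7} : Finset ℕ) := by
  have ha := lt_asymm' rank1 (rfl : r1 = _)
  have s1 : greedyAux c19 r1 7 P19 4
      = insert 4 (greedyAux c19 r1 6 {1,2,3,5,6,7} 3) :=
    greedy_sel ha (by decide) (by decide) (by norm_num) (by decide) (by norm_num)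
  have s2 : greedyAux c19 r1 6 ({1,2,3,5,6,7} : Finset ℕ) 3
      = insert 5 (greedyAux c19 r1 5 {1,2,3,6,7} 2) :=
    greedy_sel ha (by decide) (by decide) (by norm_num) (by decide) (by norm_num)
  have s3 : greedyAux c19 r1 5 ({1,2,3,6,7} : Finset ℕ) 2
      = insert 6 (greedyAux c19 r1 4 {1,2,3,7} 1) :=
    greedy_sel ha (by decide) (by decide) (by norm_num) (by decide) (by norm_num)
  have s4 : greedyAux c19 r1 4 ({1,2,3,7} : Finset ℕ) 1
      = insert 7 (greedyAux c19 r1 3 {1,2,3} 0) :=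
    greedy_sel ha (by decide) (by decide) (by norm_num) (by decide) (by norm_num)
  have s5 : greedyAux c19 r1 3 ({1,2,3} : Finset ℕ) 0
      = greedyAux c19 r1 2 {2,3} 0 :=
    greedy_skip ha 1 (by decide) (by decide) (by decide)
  have s6 : greedyAux c19 r1 2 ({2,3} : Finset ℕ) 0
      = greedyAux c19 r1 1 {3} 0 :=
    greedy_skip ha 2 (by decide) (by decide) (by decide)
  have s7 : greedyAux c19 r1 1 ({3} : Finset ℕ) 0
      = greedyAux c19 r1 0 ∅ 0 :=
    greedy_skip ha 3 (by decide) (by decide) (by decide)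
  have hcard : P19.card = 7 := by decide
  unfold GREED
  rw [hcard, s1, s2, s3, s4, s5, s6, s7]
  decide

lemma tfirst_eq (τ : Finset ℕ → Finset ℕ → Prop) (hasym : ∀ a b, τ a b → ¬ τ b a)
    (M : Finset (Finset ℕ)) (S₀ : Finset ℕ) (hmem : S₀ ∈ M)
    (hτ' : ∀ S' ∈ M, S' ≠ S₀ → τ S₀ S') :
    (if h : ∃ S ∈ M, ∀ S' ∈ M, S' ≠ S → τ S S' then h.choose else ∅) = S₀ := by
  have hex : ∃ S ∈ M, ∀ S' ∈ M, S' ≠ S → τ S S' := ⟨S₀, hmem, hτ'⟩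
  rw [dif_pos hex]
  obtain ⟨hc1, hc2⟩ := hex.choose_spec
  by_contra hne
  exact hasym _ _ (hc2 S₀ hmem (Ne.symm hne)) (hτ' _ hc1 hne)

lemma amt_eq (τ : Finset ℕ → Finset ℕ → Prop) (hasym : ∀ a b, τ a b → ¬ τ b a)
    (n : ℕ) (c : ℕ → ℕ) (B : ℕ) (Sh : Finset ℕ) (A : Profile n) (S₀ : Finset ℕ)
    (h0 : S₀ ∈ Sh.powerset)
    (h1 : S₀.sum c ≤ B ∧
      ∀ S' ∈ Sh.powerset, S'.sum c ≤ B → S'.sum (appScore A) ≤ S₀.sum (appScore A))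
    (hτ : ∀ S' ∈ Sh.powerset,
      (S'.sum c ≤ B ∧
        ∀ S'' ∈ Sh.powerset, S''.sum c ≤ B → S''.sum (appScore A) ≤ S'.sum (appScore A)) →
      S' ≠ S₀ → τ S₀ S') :
    approvalMaxTau τ n c B Sh A = S₀ := by
  unfold approvalMaxTau
  refine tfirst_eq τ hasym _ S₀ ?_ ?_
  · rw [Finset.mem_filter]; exact ⟨h0, h1⟩
  · intro S' hS'
    rw [Finset.mem_filter] at hS'
    exact hτ S' hS'.1 hS'.2

def A19 : Profile 2 := fun j => if j = 0 then ({1,2,3} : Finset ℕ) else {4,5,6,7}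
def Atr19 : Profile 2 := fun j => if j = 0 then ({1,2,3,4} : Finset ℕ) else {4,5,6,7}

end Thm19Aux

/-- some tie-breaking order over budget allocations makes the
approval-maximising rule fail strategyproofness even on unit-cost instances,
under both preference models; witnessed by the described instance where the
tie-breaking places `{p₁,p₂,p₃,p₅}` first and `{p₄,p₅,p₆,p₇}` second and
agent 1 submits `{p₁,p₂,p₃}` instead of `{p₁,p₂,p₃,p₄}`. -/
theorem approvalMaxTau_not_SP_unit :
    ∃ (τ : Finset ℕ → Finset ℕ → Prop) (prefs : Fin 2 → ℕ → ℕ → Prop),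
      IsStrictTotalOrder (Finset ℕ) τ ∧ (∀ j, IsStrictTotalOrder ℕ (prefs j)) ∧
      (∀ S : Finset ℕ, S ≠ ({1, 2, 3, 5} : Finset ℕ) → τ ({1, 2, 3, 5} : Finset ℕ) S) ∧
      (∀ S : Finset ℕ, S ≠ ({1, 2, 3, 5} : Finset ℕ) → S ≠ ({4, 5, 6, 7} : Finset ℕ) →
        τ ({4, 5, 6, 7} : Finset ℕ) S) ∧
      (prefs 0 1 2 ∧ prefs 0 2 3 ∧ prefs 0 3 4 ∧
        ∀ q ∈ P19, q ∉ ({1, 2, 3, 4} : Finset ℕ) → prefs 0 4 q) ∧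
      (prefs 1 4 5 ∧ prefs 1 5 6 ∧ prefs 1 6 7 ∧
        ∀ q ∈ P19, q ∉ ({4, 5, 6, 7} : Finset ℕ) → prefs 1 7 q) ∧
      ∃ (A : Profile 2) (i : Fin 2),
        i = 0 ∧ (∀ j, A j ⊆ P19) ∧
        A i = ({1, 2, 3} : Finset ℕ) ∧
        A i ≠ GREED c19 4 P19 (prefs i) ∧
        (∀ j, j ≠ i → A j = GREED c19 4 P19 (prefs j)) ∧
        overlapU c19 (GREED c19 4 P19 (prefs i))
            (approvalMaxTau τ 2 c19 4 P19 (Function.update A i (GREED c19 4 P19 (prefs i)))) <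
          overlapU c19 (GREED c19 4 P19 (prefs i)) (approvalMaxTau τ 2 c19 4 P19 A) ∧
        costU c19 (GREED c19 4 P19 (prefs i))
            (approvalMaxTau τ 2 c19 4 P19 (Function.update A i (GREED c19 4 P19 (prefs i)))) <
          costU c19 (GREED c19 4 P19 (prefs i)) (approvalMaxTau τ 2 c19 4 P19 A) := by
  have hasymt : ∀ a b, tau19 a b → ¬ tau19 b a := fun a b h h' => lt_asymm h h'
  have hk0 : key19 ({1,2,3,5} : Finset ℕ) = 0 := by unfold key19; rw [if_pos rfl]
  have ht1 : ∀ S : Finset ℕ, S ≠ ({1,2,3,5} : Finset ℕ) → tau19 ({1,2,3,5} : Finset ℕ) S := by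
    intro S hS
    show key19 _ < key19 S
    rw [hk0]
    unfold key19
    split_ifs <;> first | omega | simp_all
  have hk1 : key19 ({4,5,6,7} : Finset ℕ) = 1 := by
    unfold key19; rw [if_neg (by decide), if_pos rfl]
  have ht2 : ∀ S : Finset ℕ, S ≠ ({1,2,3,5} : Finset ℕ) → S ≠ ({4,5,6,7} : Finset ℕ) →
      tau19 ({4,5,6,7} : Finset ℕ) S := by
    intro S h1 h2
    show key19 _ < key19 S
    rw [hk1]
    unfold key19
    split_ifs <;> first | omega | simp_all
  have hp0 : prefs19 0 = r0 := rfl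
  have hp1 : prefs19 1 = r1 := rfl
  have hup : Function.update A19 0 ({1,2,3,4} : Finset ℕ) = Atr19 := by
    funext j
    fin_cases j <;> simp [A19, Atr19, Function.update]
  have hF0 : approvalMaxTau tau19 2 c19 4 P19 A19 = ({1,2,3,5} : Finset ℕ) :=
    amt_eq tau19 hasymt 2 c19 4 P19 A19 _ (by decide) (by decide)
      (fun S' _ _ hne => ht1 S' hne)
  have hF1 : approvalMaxTau tau19 2 c19 4 P19 Atr19 = ({4,5,6,7} : Finset ℕ) := by
    refine amt_eq tau19 hasymt 2 c19 4 P19 Atr19 _ (by decide) (by decide) ?_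
    intro S' _ hmax hne
    refine ht2 S' ?_ hne
    rintro rfl
    exact absurd (hmax.2 {4,5,6,7} (by decide) (by decide)) (by decide)
  refine ⟨tau19, prefs19, sto_of_inj key19 key19_inj, ?_, ht1, ht2, ?_, ?_, A19, 0, rfl,
    ?_, rfl, ?_, ?_, ?_, ?_⟩
  · intro j
    fin_cases j
    · exact sto_of_inj rank0 rank0_inj
    · exact sto_of_inj rank1 rank1_inj
  · refine ⟨?_, ?_, ?_, ?_⟩
    · show rank0 1 < rank0 2; decide
    · show rank0 2 < rank0 3; decide
    · show rank0 3 < rank0 4; decide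
    · show ∀ q ∈ P19, q ∉ ({1,2,3,4} : Finset ℕ) → rank0 4 < rank0 q; decide
  · refine ⟨?_, ?_, ?_, ?_⟩
    · show rank1 4 < rank1 5; decide
    · show rank1 5 < rank1 6; decide
    · show rank1 6 < rank1 7; decide
    · show ∀ q ∈ P19, q ∉ ({4,5,6,7} : Finset ℕ) → rank1 7 < rank1 q; decide
  · intro j
    fin_cases j <;> decide
  · rw [hp0, greed_r0]; decide
  · intro j hj
    fin_cases j
    · exact absurd rfl hj
    · show A19 1 = GREED c19 4 P19 (prefs19 1)
      rw [hp1, greed_r1]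
      decide
  · rw [hp0, greed_r0, hup, hF0, hF1]
    decide
  · rw [hp0, greed_r0, hup, hF0, hF1]
    decide


end PB
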